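/- Let A be a commutative ring and I an ideal of A with Ann_A(I) = 0. Then there is an isomorphism of A-modules Hom_{A ⋈ I}(A, A ⋈ I) ≅ I × 0, where A is regarded as an A ⋈ I-module via the surjection A ⋈ I → A, (a, a+i) ↦ a, and I × 0 = {(i,0) : i ∈ I} is an ideal of A ⋈ I. -/

import Mathlib

variable {A : Type} [CommRing A]

/-- The amalgamated duplication `A ⋈ I = {(a, a + i) : a ∈ A, i ∈ I}`. -/
def AmalgDup (I : Ideal A) : Subring (A × A) where
  carrier := {x | ∃ a : A, ∃ i ∈ I, x = (a, a + i)}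
  zero_mem' := ⟨0, 0, I.zero_mem, by ext <;> simp⟩
  one_mem' := ⟨1, 0, I.zero_mem, by ext <;> simp⟩
  add_mem' := by
    rintro x y ⟨a, i, hi, rfl⟩ ⟨b, k, hk, rfl⟩
    exact ⟨a + b, i + k, I.add_mem hi hk, by
      simp only [Prod.mk_add_mk, Prod.mk.injEq]
      exact ⟨trivial, by ring⟩⟩
  neg_mem' := by
    rintro x ⟨a, i, hi, rfl⟩
    exact ⟨-a, -i, I.neg_mem hi, by
      simp only [Prod.neg_mk, Prod.mk.injEq]
      exact ⟨trivial, by ring⟩⟩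
  mul_mem' := by
    rintro x y ⟨a, i, hi, rfl⟩ ⟨b, k, hk, rfl⟩
    exact ⟨a * b, a * k + i * b + i * k,
      I.add_mem (I.add_mem (I.mul_mem_left _ hk) (I.mul_mem_right _ hi)) (I.mul_mem_right _ hi),
      by
      simp only [Prod.mk_mul_mk, Prod.mk.injEq]
      exact ⟨trivial, by ring⟩⟩

/-- The canonical ring homomorphism `A → A ⋈ I`, `a ↦ (a, a)`. -/
def AmalgDup.incl (I : Ideal A) : A →+* AmalgDup I where
  toFun a := ⟨(a, a), a, 0, I.zero_mem, by simp⟩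
  map_one' := Subtype.ext (by simp)
  map_mul' x y := Subtype.ext (by simp [Prod.mk_mul_mk])
  map_zero' := Subtype.ext (by simp)
  map_add' x y := Subtype.ext (by simp [Prod.mk_add_mk])

/-- The projection `A ⋈ I → A`, `(a, a + i) ↦ a`; it is surjective with kernel `0 × I`. -/
def AmalgDup.proj (I : Ideal A) : AmalgDup I →+* A :=
  (RingHom.fst A A).comp (AmalgDup I).subtype

/-- The ideal `I × 0 = {(i, 0) : i ∈ I}` of `A ⋈ I`. -/
def AmalgDup.idealI0 (I : Ideal A) : Ideal (AmalgDup I) where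
  carrier := {x | ∃ i ∈ I, (x : A × A) = (i, 0)}
  zero_mem' := ⟨0, I.zero_mem, by ext <;> simp⟩
  add_mem' := by
    rintro x y ⟨i, hi, hx⟩ ⟨k, hk, hy⟩
    refine ⟨i + k, I.add_mem hi hk, ?_⟩
    have : ((x + y : AmalgDup I) : A × A) = (x : A × A) + (y : A × A) := rfl
    rw [this, hx, hy]
    simp
  smul_mem' := by
    rintro c x ⟨i, hi, hx⟩
    refine ⟨(c : A × A).1 * i, I.mul_mem_left _ hi, ?_⟩
    have : ((c • x : AmalgDup I) : A × A) = (c : A × A) * (x : A × A) := rfl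
    rw [this, hx]
    simp [Prod.ext_iff]

set_option maxHeartbeats 1000000 in
theorem amalgDup_hom_iso (I : Ideal A)
    (hann : ∀ a : A, (∀ i ∈ I, a * i = 0) → a = 0) :
    letI : Module (AmalgDup I) A := Module.compHom _ (AmalgDup.proj I)
    letI : Module A (A →ₗ[AmalgDup I] AmalgDup I) :=
      Module.compHom _ (AmalgDup.incl I)
    letI : Module A (AmalgDup.idealI0 I) := Module.compHom _ (AmalgDup.incl I)
    Nonempty ((A →ₗ[AmalgDup I] AmalgDup I) ≃ₗ[A] AmalgDup.idealI0 I) := by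
  letI : Module (AmalgDup I) A := Module.compHom _ (AmalgDup.proj I)
  letI : Module A (A →ₗ[AmalgDup I] AmalgDup I) := Module.compHom _ (AmalgDup.incl I)
  letI : Module A (AmalgDup.idealI0 I) := Module.compHom _ (AmalgDup.incl I)
  have smul_def : ∀ (c : AmalgDup I) (a : A), c • a = (c : A × A).1 * a := fun _ _ => rfl
  have mem1 : ∀ f : A →ₗ[AmalgDup I] AmalgDup I, f 1 ∈ AmalgDup.idealI0 I := by
    intro f
    obtain ⟨a, j, hj, hx⟩ := (f 1).2
    have key : a + j = 0 := by
      apply hann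
      intro i hi
      set z : AmalgDup I := ⟨(0, i), 0, i, hi, by simp⟩ with hzdef
      have hz : z • (1 : A) = 0 := by rw [smul_def]; simp [hzdef]
      have h := f.map_smul z 1
      rw [hz, map_zero] at h
      have h2 : (z * f 1 : AmalgDup I) = 0 := h.symm
      have h4 : ((z * f 1 : AmalgDup I) : A × A) = ((0 : A), i) * ((f 1 : AmalgDup I) : A × A) := rfl
      have h5 : i * (a + j) = 0 := by
        calc i * (a + j) = ((z * f 1 : AmalgDup I) : A × A).2 := by rw [h4, hx]; simp
          _ = ((0 : AmalgDup I) : A × A).2 := by rw [h2]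
          _ = 0 := rfl
      rw [mul_comm]; exact h5
    have ha : a ∈ I := by
      have : a = -j := eq_neg_of_add_eq_zero_left key
      rw [this]; exact I.neg_mem hj
    exact ⟨a, ha, by rw [hx, key]⟩
  have hmulz : ∀ (x : AmalgDup.idealI0 I) (c : AmalgDup I) (a : A),
      AmalgDup.incl I (c • a) * x.1 = c * (AmalgDup.incl I a * x.1) := by
    intro x c a
    obtain ⟨i, hi, hx⟩ := x.2
    apply Subtype.ext
    show ((AmalgDup.incl I (c • a) : AmalgDup I) : A × A) * ((x.1 : AmalgDup I) : A × A)
        = ((c : A × A)) * (((AmalgDup.incl I a : AmalgDup I) : A × A) * ((x.1 : AmalgDup I) : A × A))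
    rw [hx, smul_def]
    show ((c : A × A).1 * a, (c : A × A).1 * a) * (i, (0:A))
        = (c : A × A) * ((a, a) * (i, (0:A)))
    (ext <;> simp); ring
  have h1 : ∀ a : A, (AmalgDup.incl I a) • (1 : A) = a := by
    intro a; rw [smul_def]; show a * 1 = a; rw [mul_one]
  refine ⟨{ toFun := fun f => ⟨f 1, mem1 f⟩,
            map_add' := fun f g => rfl,
            map_smul' := fun a f => rfl,
            invFun := fun x =>
              { toFun := fun a => AmalgDup.incl I a * x.1,
                map_add' := fun a b => by simp only [map_add, add_mul],
                map_smul' := fun c a => hmulz x c a },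
            left_inv := ?_, right_inv := ?_ }⟩
  · intro f
    apply LinearMap.ext
    intro a
    show AmalgDup.incl I a * f 1 = f a
    conv_rhs => rw [← h1 a, f.map_smul]
    rfl
  · intro x
    apply Subtype.ext
    show (AmalgDup.incl I 1 * x.1 : AmalgDup I) = x.1
    rw [map_one, one_mul]
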